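/- arXiv:1705.07877 — 3 statements merged into one kernel-verified Lean document; each statement's English description precedes it below -/
import Mathlib

section
/- Let f : ℝⁿ → ℝ be expressible as f(x) = α₀ ⊗₁ α₁f₁(x_{I₁}) ⊗₂ α₂f₂(x_{I₂}) ⊗₃ ⋯ ⊗ₘ αₘfₘ(x_{Iₘ}), where the index sets I₁,…,Iₘ partition {1,…,n}, each ⊗ᵢ is either addition or multiplication, and the αᵢ are real constants. Then there exist an integer p ≥ 1, integers q₁,…,q_p ≥ 1 with q₁+⋯+q_p = m, constants β₀, β₁,…,β_p, and scalar functions ψ_{i,j} (each depending on a sub-block of the variables, so that these blocks refine the partition I₁,…,Iₘ) such that f(x) = β₀ + Σ_{i=1}^{p} βᵢ ∏_{j=1}^{qᵢ} ψ_{i,j}(x). -/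
/-- `f` depends only on the variables indexed by `S`. -/
def DependsOnIdx {n : ℕ} (f : (Fin n → ℝ) → ℝ) (S : Finset (Fin n)) : Prop :=
  ∀ x y : Fin n → ℝ, (∀ i ∈ S, x i = y i) → f x = f y

/-- Evaluate a chain `a ⊗₁ t₁ ⊗₂ t₂ ⋯` where `true` stands for `×` and `false`
for `+`, with the usual precedence of `×` over `+`. -/
def chainEval : ℝ → List (Bool × ℝ) → ℝ
  | a, [] => a
  | a, (true, t) :: rest => chainEval (a * t) rest
  | a, (false, t) :: rest => a + chainEval t rest

namespace PSaux

def firstRun {σ : Type*} : List (Bool × σ) → List σ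
  | (true, t) :: rest => t :: firstRun rest
  | _ => []

def restRuns {σ : Type*} : List (Bool × σ) → List (List σ)
  | [] => []
  | (true, _) :: rest => restRuns rest
  | (false, t) :: rest => (t :: firstRun rest) :: restRuns rest

lemma firstRun_append_join {σ : Type*} (l : List (Bool × σ)) :
    firstRun l ++ (restRuns l).flatten = l.map Prod.snd := by
  induction l with
  | nil => simp [firstRun, restRuns]
  | cons bt rest ih =>
    obtain ⟨b, t⟩ := bt
    cases b <;> simp [firstRun, restRuns, ih]

lemma restRuns_ne_nil {σ : Type*} (l : List (Bool × σ)) : ∀ r ∈ restRuns l, r ≠ [] := by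
  induction l with
  | nil => simp [restRuns]
  | cons bt rest ih =>
    obtain ⟨b, t⟩ := bt
    cases b
    · intro r hr
      simp only [restRuns, List.mem_cons] at hr
      rcases hr with h | h
      · subst h; simp
      · exact ih r h
    · exact ih

lemma chain_runs {σ : Type*} (g : σ → ℝ) : ∀ (l : List (Bool × σ)) (a : ℝ),
    chainEval a (l.map (fun bk => (bk.1, g bk.2))) =
      a * ((firstRun l).map g).prod + ((restRuns l).map fun r => (r.map g).prod).sum := by
  intro l
  induction l with
  | nil => intro a; simp [chainEval, firstRun, restRuns]
  | cons bt rest ih =>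
    obtain ⟨b, t⟩ := bt
    cases b <;> intro a
    · simp only [List.map_cons, chainEval, restRuns, firstRun]
      rw [ih (g t)]
      simp [List.prod_cons]
    · simp only [List.map_cons, chainEval, firstRun, restRuns]
      rw [ih (a * g t)]
      simp [List.prod_cons]
      ring

end PSaux

namespace PSaux

lemma build {n m : ℕ} (f : (Fin n → ℝ) → ℝ)
    (I : Fin m → Finset (Fin n)) (α : Fin m → ℝ)
    (fs : Fin m → (Fin n → ℝ) → ℝ)
    (hdep : ∀ i, DependsOnIdx (fs i) (I i))
    (G : List (List (Fin m))) (hG : G ≠ [])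
    (hne : ∀ r ∈ G, r ≠ [])
    (hlen : (G.map List.length).sum = m)
    (β₀ : ℝ) (b : Fin G.length → ℝ)
    (hfx : ∀ x, f x = β₀ + ∑ i : Fin G.length,
        b i * ((G.get i).map fun k => α k * fs k x).prod) :
    ∃ (p : ℕ), 1 ≤ p ∧ ∃ (q : Fin p → ℕ),
      (∀ i, 1 ≤ q i) ∧ (∑ i, q i) = m ∧
      ∃ (β₀ : ℝ) (β : Fin p → ℝ)
        (J : (i : Fin p) → Fin (q i) → Finset (Fin n))
        (ψ : (i : Fin p) → Fin (q i) → (Fin n → ℝ) → ℝ),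
        (∀ i j, ∃ k, J i j = I k) ∧
        (∀ i j, DependsOnIdx (ψ i j) (J i j)) ∧
        ∀ x, f x = β₀ + ∑ i, β i * ∏ j, ψ i j x := by
  refine ⟨G.length, ?_, fun i => (G.get i).length, ?_, ?_, β₀, b,
    fun i j => I ((G.get i).get j),
    fun i j x => α ((G.get i).get j) * fs ((G.get i).get j) x, ?_, ?_, ?_⟩
  · exact List.length_pos_iff.mpr hG
  · intro i
    exact List.length_pos_iff.mpr (hne _ (G.get_mem i))
  · have hof : G.map List.length = List.ofFn fun i => (G.get i).length := by
      conv_lhs => rw [← List.ofFn_get G]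
      rw [List.map_ofFn]
      rfl
    have h2 : ∑ i : Fin G.length, (G.get i).length = (G.map List.length).sum := by
      rw [hof, List.sum_ofFn]
    exact h2.trans hlen
  · intro i j; exact ⟨_, rfl⟩
  · intro i j x y h
    dsimp only
    rw [hdep ((G.get i).get j) x y h]
  · intro x
    rw [hfx x]
    congr 1
    apply Finset.sum_congr rfl
    intro i _
    congr 1
    rw [← List.prod_ofFn]
    congr 1
    conv_lhs => rw [← List.ofFn_get (G.get i)]
    rw [List.map_ofFn]
    rfl

end PSaux

namespace PSaux
lemma listSum_eq_finSum {σ β : Type*} [AddCommMonoid β] (l : List σ) (h : σ → β) :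
    (l.map h).sum = ∑ i : Fin l.length, h (l.get i) := by
  conv_lhs => rw [← List.ofFn_get l]
  rw [List.map_ofFn, List.sum_ofFn]
  rfl
end PSaux

theorem partially_separable_normal_form {n : ℕ} (f : (Fin n → ℝ) → ℝ)
    (m : ℕ) (hm : 1 ≤ m)
    (I : Fin m → Finset (Fin n))
    (hdisj : ∀ i j : Fin m, i ≠ j → Disjoint (I i) (I j))
    (hcover : ∀ k : Fin n, ∃ i, k ∈ I i)
    (α₀ : ℝ) (α : Fin m → ℝ) (ops : Fin m → Bool)
    (fs : Fin m → (Fin n → ℝ) → ℝ)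
    (hdep : ∀ i, DependsOnIdx (fs i) (I i))
    (hf : ∀ x, f x = chainEval α₀ (List.ofFn fun i => (ops i, α i * fs i x))) :
    ∃ (p : ℕ), 1 ≤ p ∧ ∃ (q : Fin p → ℕ),
      (∀ i, 1 ≤ q i) ∧ (∑ i, q i) = m ∧
      ∃ (β₀ : ℝ) (β : Fin p → ℝ)
        (J : (i : Fin p) → Fin (q i) → Finset (Fin n))
        (ψ : (i : Fin p) → Fin (q i) → (Fin n → ℝ) → ℝ),
        (∀ i j, ∃ k, J i j = I k) ∧
        (∀ i j, DependsOnIdx (ψ i j) (J i j)) ∧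
        ∀ x, f x = β₀ + ∑ i, β i * ∏ j, ψ i j x := by
  classical
  set L : List (Bool × Fin m) := List.ofFn (fun i => (ops i, i)) with hL
  set F : List (Fin m) := PSaux.firstRun L with hF
  set R : List (List (Fin m)) := PSaux.restRuns L with hR
  have hEval : ∀ x, f x = α₀ * (F.map fun k => α k * fs k x).prod +
      (R.map fun r => (r.map fun k => α k * fs k x).prod).sum := by
    intro x
    rw [hf x]
    have hmap : (List.ofFn fun i => (ops i, α i * fs i x)) =
        L.map (fun bk => (bk.1, (fun k => α k * fs k x) bk.2)) := by
      rw [hL, List.map_ofFn]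
      rfl
    rw [hmap]
    exact PSaux.chain_runs (fun k => α k * fs k x) L α₀
  have hjoin : F ++ R.flatten = List.ofFn (fun i : Fin m => i) := by
    rw [hF, hR, PSaux.firstRun_append_join, hL, List.map_ofFn]
    rfl
  have hlenj : F.length + (R.map List.length).sum = m := by
    have := congrArg List.length hjoin
    simpa [List.length_flatten] using this
  rcases hFc : F with _ | ⟨hd, tl⟩
  · -- first run empty
    have hlenR : (R.map List.length).sum = m := by simpa [hFc] using hlenj
    have hRne : R ≠ [] := by
      intro h
      rw [h] at hlenR
      simp at hlenR
      omega
    refine PSaux.build f I α fs hdep R hRne (PSaux.restRuns_ne_nil L) hlenR α₀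
      (fun _ => 1) ?_
    intro x
    rw [hEval x, hFc, PSaux.listSum_eq_finSum]
    simp
  · -- first run nonempty
    have hGne : ∀ r ∈ (hd :: tl) :: R, r ≠ [] := by
      intro r hr
      rcases List.mem_cons.mp hr with h | h
      · subst h; simp
      · exact PSaux.restRuns_ne_nil L r h
    have hlenG : (((hd :: tl) :: R).map List.length).sum = m := by
      simp only [List.map_cons, List.sum_cons]
      rw [← hFc]
      exact hlenj
    refine PSaux.build f I α fs hdep ((hd :: tl) :: R) (by simp) hGne hlenG 0
      (fun i => Fin.cases α₀ (fun _ => 1) i) ?_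
    intro x
    rw [hEval x, hFc]
    dsimp only [List.length_cons]
    rw [Fin.sum_univ_succ (n := R.length)]
    simp only [Fin.cases_zero, Fin.cases_succ, List.get_cons_succ, one_mul]
    rw [PSaux.listSum_eq_finSum]
    simp
end

section
/- Conversely, if f : ℝⁿ → ℝ can be written as f(x) = β₀ + Σ_{i=1}^{p} βᵢ ∏_{j=1}^{qᵢ} ψ_{i,j}(x_{I_{i,j}}), where the index sets I_{i,j} partition {1,…,n}, then f is partially separable: there exist constants α₀,…,αₘ (with m = Σᵢ qᵢ), binary operators ⊗₁,…,⊗ₘ ∈ {+, ×}, and a labeling of the ψ_{i,j} as f₁,…,fₘ such that f(x) = α₀ ⊗₁ α₁f₁ ⊗₂ ⋯ ⊗ₘ αₘfₘ (with × binding tighter than +). -/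
/-- `f` depends only on the variables indexed by `S`. -/
def DependsOnFinset {n : ℕ} (f : (Fin n → ℝ) → ℝ) (S : Finset (Fin n)) : Prop :=
  ∀ x y : Fin n → ℝ, (∀ i ∈ S, x i = y i) → f x = f y

/-- A multiplicative block: `(false, c*t₁) :: (true, t₂) :: ⋯`. -/
def mkBlock (c : ℝ) : List ℝ → List (Bool × ℝ)
  | [] => []
  | t :: ts => (false, c * t) :: ts.map (fun s => (true, s))

/-- The value contributed by a block. -/
def bval (c : ℝ) : List ℝ → ℝ
  | [] => 0
  | t :: ts => c * (t :: ts).prod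

lemma chainEval_true_prefix (a : ℝ) (ts : List ℝ) (rest : List (Bool × ℝ)) :
    chainEval a (ts.map (fun s => (true, s)) ++ rest) = chainEval (a * ts.prod) rest := by
  induction ts generalizing a with
  | nil => simp
  | cons t ts ih => simp [chainEval, ih, mul_assoc]

lemma chainEval_flatten_mkBlock (a : ℝ) (P : List (ℝ × List ℝ)) :
    chainEval a ((P.map fun pr => mkBlock pr.1 pr.2).flatten)
      = a + (P.map fun pr => bval pr.1 pr.2).sum := by
  induction P generalizing a with
  | nil => simp [chainEval]
  | cons pr P ih =>
    obtain ⟨c, ts⟩ := pr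
    cases ts with
    | nil => simpa [mkBlock, bval] using ih a
    | cons t ts' =>
      have h1 : mkBlock c (t :: ts') = (false, c * t) :: ts'.map (fun s => (true, s)) := rfl
      have h2 : bval c (t :: ts') = c * (t :: ts').prod := rfl
      rw [List.map_cons, List.flatten_cons, h1, List.cons_append]
      show a + chainEval (c * t) _ = _
      rw [chainEval_true_prefix, ih, List.map_cons, List.sum_cons, h2, List.prod_cons]
      ring

lemma bval_ne_nil (c : ℝ) {ts : List ℝ} (h : ts ≠ []) : bval c ts = c * ts.prod := by
  cases ts with
  | nil => exact absurd rfl h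
  | cons t ts => rfl

lemma blk_map {σ : Type*} (g2 : σ → ℝ) (c : ℝ) (N : ℕ) (F : Fin N → σ) :
    (List.ofFn fun j : Fin N =>
        ((decide (j.val ≠ 0) : Bool), (if j.val = 0 then c else (1:ℝ)), F j)).map
      (fun t => (t.1, t.2.1 * g2 t.2.2))
    = mkBlock c (List.ofFn fun j => g2 (F j)) := by
  cases N with
  | zero => simp [mkBlock]
  | succ k =>
    rw [List.map_ofFn, List.ofFn_succ, List.ofFn_succ (f := fun j => g2 (F j))]
    simp [mkBlock, List.map_ofFn, Function.comp_def, Fin.val_succ]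

theorem normal_form_partially_separable {n : ℕ} (f : (Fin n → ℝ) → ℝ)
    (p : ℕ) (q : Fin p → ℕ)
    (J : (i : Fin p) → Fin (q i) → Finset (Fin n))
    (hdisj : ∀ a b : Σ i : Fin p, Fin (q i), a ≠ b → Disjoint (J a.1 a.2) (J b.1 b.2))
    (hcover : ∀ k : Fin n, ∃ i j, k ∈ J i j)
    (β₀ : ℝ) (β : Fin p → ℝ)
    (ψ : (i : Fin p) → Fin (q i) → (Fin n → ℝ) → ℝ)
    (hdep : ∀ i j, DependsOnFinset (ψ i j) (J i j))
    (hf : ∀ x, f x = β₀ + ∑ i, β i * ∏ j, ψ i j x) :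
    ∃ (m : ℕ), m = ∑ i, q i ∧
      ∃ (α₀ : ℝ) (α : Fin m → ℝ) (ops : Fin m → Bool)
        (e : Fin m → Σ i : Fin p, Fin (q i)),
        Function.Bijective e ∧
        ∀ x, f x = chainEval α₀
          (List.ofFn fun k => (ops k, α k * ψ (e k).1 (e k).2 x)) := by
  classical
  set blk : (i : Fin p) → List (Bool × ℝ × Σ i : Fin p, Fin (q i)) :=
    fun i => List.ofFn fun j : Fin (q i) =>
      ((decide (j.val ≠ 0) : Bool), (if j.val = 0 then β i else (1:ℝ)),
        (⟨i, j⟩ : Σ i : Fin p, Fin (q i))) with hblk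
  set T : List (Bool × ℝ × Σ i : Fin p, Fin (q i)) := (List.ofFn blk).flatten with hT
  have hm : T.length = ∑ i, q i := by
    simp [hT, List.length_flatten, List.map_ofFn, Function.comp_def, hblk, List.sum_ofFn]
  refine ⟨T.length, hm, β₀ + ∑ i, (if q i = 0 then β i else 0),
    fun k => (T.get k).2.1, fun k => (T.get k).1, fun k => (T.get k).2.2, ?_, ?_⟩
  · rw [Fintype.bijective_iff_surjective_and_card]
    constructor
    · rintro ⟨i, j⟩
      have ht : ((decide (j.val ≠ 0) : Bool), (if j.val = 0 then β i else (1:ℝ)),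
          (⟨i, j⟩ : Σ i : Fin p, Fin (q i))) ∈ T := by
        refine List.mem_flatten.2 ⟨blk i, ?_, ?_⟩
        · exact List.mem_ofFn.2 ⟨i, rfl⟩
        · exact List.mem_ofFn.2 ⟨j, rfl⟩
      obtain ⟨k, hk⟩ := List.mem_iff_get.1 ht
      exact ⟨k, by show (T.get k).2.2 = _; rw [hk]⟩
    · simp [Fintype.card_sigma, hm]
  · intro x
    rw [hf]
    have key : (List.ofFn fun k => ((T.get k).1,
          (T.get k).2.1 * ψ (T.get k).2.2.1 (T.get k).2.2.2 x))
        = T.map fun t => (t.1, t.2.1 * ψ t.2.2.1 t.2.2.2 x) := by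
      conv_rhs => rw [← List.ofFn_get T, List.map_ofFn]
      rfl
    rw [key]
    have hmap : (T.map fun t => (t.1, t.2.1 * ψ t.2.2.1 t.2.2.2 x))
        = ((List.ofFn fun i => ((β i : ℝ), List.ofFn fun j => ψ i j x)).map
            fun pr => mkBlock pr.1 pr.2).flatten := by
      rw [hT, List.map_flatten, List.map_ofFn, List.map_ofFn]
      exact congrArg List.flatten (congrArg List.ofFn (funext fun i =>
        blk_map (fun s : Σ i : Fin p, Fin (q i) => ψ s.1 s.2 x) (β i) (q i) (fun j => ⟨i, j⟩)))
    rw [hmap, chainEval_flatten_mkBlock, List.map_ofFn, List.sum_ofFn]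
    rw [add_assoc, ← Finset.sum_add_distrib]
    congr 1
    refine Finset.sum_congr rfl fun i _ => ?_
    by_cases h : q i = 0
    · haveI : IsEmpty (Fin (q i)) := by rw [h]; infer_instance
      have hnil : (List.ofFn fun j : Fin (q i) => ψ i j x) = [] :=
        List.eq_nil_of_length_eq_zero (by simp [h])
      simp [h, hnil, bval, Finset.univ_eq_empty]
    · have hne : (List.ofFn fun j : Fin (q i) => ψ i j x) ≠ [] := by
        intro hc
        apply h
        simpa using congrArg List.length hc
      simp [h, bval_ne_nil _ hne, List.prod_ofFn]
end

section
/- If f : ℝⁿ → ℝ is completely separable, i.e. it admits a chain representation f = α₀ ⊗₁ α₁f₁(x₁) ⊗₂ ⋯ ⊗ₙ αₙfₙ(xₙ) with each fᵢ a function of the single variable xᵢ and each ⊗ᵢ ∈ {+,×}, then f admits a block-factor normal form f(x) = β₀ + Σ_{i=1}^{p} βᵢ ∏_{j∈Bᵢ} ψⱼ(xⱼ) where B₁,…,B_p partition {1,…,n} and each ψⱼ is a univariate function. -/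
/-- `f` depends only on the variables indexed by `S`. -/
def DependsOnCoords {n : ℕ} (f : (Fin n → ℝ) → ℝ) (S : Finset (Fin n)) : Prop :=
  ∀ x y : Fin n → ℝ, (∀ i ∈ S, x i = y i) → f x = f y

private lemma chain_aux : ∀ (n : ℕ) (ts : Fin n → ℝ → ℝ) (ops : Fin n → Bool),
    ∃ (p : ℕ) (R₀ : Finset (Fin n)) (B : Fin p → Finset (Fin n)),
      (∀ i j : Fin p, i ≠ j → Disjoint (B i) (B j)) ∧
      (∀ i : Fin p, Disjoint R₀ (B i)) ∧
      (∀ k : Fin n, k ∈ R₀ ∨ ∃ i, k ∈ B i) ∧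
      ∃ (β₀ : ℝ) (β : Fin p → ℝ),
        ∀ (a : ℝ) (x : Fin n → ℝ),
          chainEval a (List.ofFn fun i => (ops i, ts i (x i))) =
            a * ∏ j ∈ R₀, ts j (x j) + β₀ + ∑ i, β i * ∏ j ∈ B i, ts j (x j) := by
  intro n
  induction n with
  | zero =>
    intro ts ops
    exact ⟨0, ∅, fun i => ∅, by simp, by simp, fun k => k.elim0, 0, fun i => 0,
      by simp [chainEval]⟩
  | succ n ih =>
    intro ts ops
    obtain ⟨p, R₀, B, hB, hRB, hcov, β₀, β, heq⟩ :=
      ih (fun i => ts i.succ) (fun i => ops i.succ)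
    have hofn : ∀ x : Fin (n + 1) → ℝ,
        (List.ofFn fun i : Fin (n + 1) => (ops i, ts i (x i))) =
          (ops 0, ts 0 (x 0)) ::
            (List.ofFn fun i : Fin n => (ops i.succ, ts i.succ (x i.succ))) := by
      intro x; rw [List.ofFn_succ]
    let emb : Fin n ↪ Fin (n + 1) := ⟨Fin.succ, Fin.succ_injective n⟩
    have hzero : ∀ (S : Finset (Fin n)), (0 : Fin (n + 1)) ∉ S.map emb := by
      intro S h
      obtain ⟨j, _, hj⟩ := Finset.mem_map.1 h
      exact (Fin.succ_ne_zero j) hj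
    have hprodmap : ∀ (S : Finset (Fin n)) (x : Fin (n + 1) → ℝ),
        ∏ j ∈ S.map emb, ts j (x j) = ∏ j ∈ S, ts j.succ (x j.succ) := by
      intro S x; rw [Finset.prod_map]; rfl
    have hdisjmap : ∀ S T : Finset (Fin n), Disjoint S T →
        Disjoint (S.map emb) (T.map emb) := by
      intro S T h
      exact Finset.disjoint_map emb |>.2 h
    cases hop : ops 0 with
    | true =>
      -- multiply: 0 joins the head run
      refine ⟨p, insert 0 (R₀.map emb), fun i => (B i).map emb, ?_, ?_, ?_, β₀, β, ?_⟩
      · intro i j hij; exact hdisjmap _ _ (hB i j hij)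
      · intro i
        rw [Finset.disjoint_insert_left]
        exact ⟨hzero _, hdisjmap _ _ (hRB i)⟩
      · intro k
        refine Fin.cases ?_ ?_ k
        · exact Or.inl (Finset.mem_insert_self _ _)
        · intro k'
          rcases hcov k' with h | ⟨i, hi⟩
          · exact Or.inl (Finset.mem_insert_of_mem (Finset.mem_map_of_mem _ h))
          · exact Or.inr ⟨i, Finset.mem_map_of_mem _ hi⟩
      · intro a x
        rw [hofn, hop]
        show chainEval (a * ts 0 (x 0)) _ = _
        rw [heq (a * ts 0 (x 0)) (fun i => x i.succ)]
        rw [Finset.prod_insert (hzero R₀), hprodmap]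
        have : ∀ i : Fin p, ∏ j ∈ (B i).map emb, ts j (x j)
            = ∏ j ∈ B i, ts j.succ (x j.succ) := fun i => hprodmap _ x
        simp only [this]
        ring
    | false =>
      -- add: 0 starts a new block
      refine ⟨p + 1, ∅, Fin.cons (insert 0 (R₀.map emb)) (fun i => (B i).map emb),
        ?_, ?_, ?_, β₀, Fin.cons 1 β, ?_⟩
      · intro i j hij
        rcases Fin.eq_zero_or_eq_succ i with rfl | ⟨i', rfl⟩
        · rcases Fin.eq_zero_or_eq_succ j with rfl | ⟨j', rfl⟩
          · exact absurd rfl hij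
          · simp only [Fin.cons_zero, Fin.cons_succ]
            rw [Finset.disjoint_insert_left]
            exact ⟨hzero _, hdisjmap _ _ (hRB j')⟩
        · rcases Fin.eq_zero_or_eq_succ j with rfl | ⟨j', rfl⟩
          · simp only [Fin.cons_zero, Fin.cons_succ]
            rw [Finset.disjoint_insert_right]
            exact ⟨hzero _, (hdisjmap _ _ (hRB i')).symm⟩
          · simp only [Fin.cons_succ]
            exact hdisjmap _ _ (hB i' j' (fun h => hij (by rw [h])))
      · intro i; simp
      · intro k
        refine Fin.cases ?_ ?_ k
        · exact Or.inr ⟨0, by simp⟩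
        · intro k'
          rcases hcov k' with h | ⟨i, hi⟩
          · refine Or.inr ⟨0, ?_⟩
            simp only [Fin.cons_zero]
            exact Finset.mem_insert_of_mem (Finset.mem_map_of_mem _ h)
          · refine Or.inr ⟨i.succ, ?_⟩
            simp only [Fin.cons_succ]
            exact Finset.mem_map_of_mem _ hi
      · intro a x
        rw [hofn, hop]
        show a + chainEval (ts 0 (x 0)) _ = _
        rw [heq (ts 0 (x 0)) (fun i => x i.succ)]
        rw [Fin.sum_univ_succ]
        simp only [Fin.cons_zero, Fin.cons_succ]
        rw [Finset.prod_insert (hzero R₀), hprodmap]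
        have : ∀ i : Fin p, ∏ j ∈ (B i).map emb, ts j (x j)
            = ∏ j ∈ B i, ts j.succ (x j.succ) := fun i => hprodmap _ x
        simp only [this]
        ring

theorem completely_separable_normal_form {n : ℕ} (f : (Fin n → ℝ) → ℝ)
    (α₀ : ℝ) (α : Fin n → ℝ) (ops : Fin n → Bool)
    (fs : Fin n → ℝ → ℝ)
    (hf : ∀ x, f x = chainEval α₀ (List.ofFn fun i => (ops i, α i * fs i (x i)))) :
    ∃ (p : ℕ), 1 ≤ p ∧
      ∃ (B : Fin p → Finset (Fin n)),
        (∀ i j : Fin p, i ≠ j → Disjoint (B i) (B j)) ∧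
        (∀ k : Fin n, ∃ i, k ∈ B i) ∧
        ∃ (β₀ : ℝ) (β : Fin p → ℝ) (ψ : Fin n → ℝ → ℝ),
          ∀ x, f x = β₀ + ∑ i, β i * ∏ j ∈ B i, ψ j (x j) := by
  obtain ⟨p, R₀, B, hB, hRB, hcov, β₀, β, heq⟩ :=
    chain_aux n (fun i y => α i * fs i y) ops
  refine ⟨p + 1, Nat.le_add_left 1 p, Fin.cons R₀ B, ?_, ?_, β₀,
    Fin.cons α₀ β, fun i y => α i * fs i y, ?_⟩
  · intro i j hij
    rcases Fin.eq_zero_or_eq_succ i with rfl | ⟨i', rfl⟩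
    · rcases Fin.eq_zero_or_eq_succ j with rfl | ⟨j', rfl⟩
      · exact absurd rfl hij
      · simpa using hRB j'
    · rcases Fin.eq_zero_or_eq_succ j with rfl | ⟨j', rfl⟩
      · simpa using (hRB i').symm
      · simpa using hB i' j' (fun h => hij (by rw [h]))
  · intro k
    rcases hcov k with h | ⟨i, hi⟩
    · exact ⟨0, by simpa using h⟩
    · exact ⟨i.succ, by simpa using hi⟩
  · intro x
    rw [hf x, heq α₀ x, Fin.sum_univ_succ]
    simp only [Fin.cons_zero, Fin.cons_succ]
    ring
end
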